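/- Fix natural numbers d, ω, δ with ω ≤ d and δ ≤ d. Then there exists a set S of binary words of length d, each of weight exactly ω (i.e., each x ∈ S ⊆ {0,1}^d satisfies Σ_{i=1}^d x_i = ω), such that any two distinct words in S have Hamming distance at least δ, and |S| ≥ C(d,ω) / (Σ_{i=0}^{⌊δ/2⌋} C(ω,i)·C(d−ω,i)), where C(n,k) denotes the binomial coefficient. -/

import Mathlib

open Finset

/-- The weight of a binary word `x : Fin d → Bool` is the number of coordinates equal to 1. -/
def weight {d : ℕ} (x : Fin d → Bool) : ℕ := (Finset.univ.filter fun i => x i = true).card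

lemma weight_card (d ω : ℕ) :
    (Finset.univ.filter fun x : Fin d → Bool => weight x = ω).card = d.choose ω := by
  classical
  have hpc : (Finset.powersetCard ω (Finset.univ : Finset (Fin d))).card = d.choose ω := by
    rw [Finset.card_powersetCard, Finset.card_univ, Fintype.card_fin]
  rw [← hpc]
  refine Finset.card_bij' (fun x _ => Finset.univ.filter fun j => x j = true)
    (fun A _ => fun j => decide (j ∈ A)) ?_ ?_ ?_ ?_
  · intro x hx
    simp only [mem_filter, mem_univ, true_and] at hx
    rw [Finset.mem_powersetCard]
    exact ⟨Finset.subset_univ _, hx⟩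
  · intro A hA
    rw [Finset.mem_powersetCard] at hA
    refine Finset.mem_filter.mpr ⟨Finset.mem_univ _, ?_⟩
    rw [← hA.2]; unfold weight; congr 1; ext j; simp
  · intro x hx; funext j; simp
  · intro A hA; ext j; simp

lemma ball_card (d ω δ : ℕ) (s : Fin d → Bool) (hs : weight s = ω) :
    (Finset.univ.filter fun x : Fin d → Bool =>
        weight x = ω ∧ hammingDist x s ≤ δ - 1).card
      ≤ ∑ i ∈ Finset.range (δ / 2 + 1), ω.choose i * (d - ω).choose i := by
  classical
  set P := Finset.univ.filter fun i => s i = true with hPdef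
  set Q := Finset.univ.filter fun i => s i = false with hQdef
  have hP : P.card = ω := hs
  have hQ : Q.card = d - ω := by
    have h1 : P.card + Q.card = d := by
      have h2 := Finset.card_filter_add_card_filter_not
        (s := (Finset.univ : Finset (Fin d))) (p := fun i => s i = true)
      rw [Finset.card_univ, Fintype.card_fin] at h2
      have h3 : Q = Finset.univ.filter (fun a => ¬ s a = true) := by
        rw [hQdef]
        apply Finset.filter_congr
        intro i _
        simp
      rw [h3]
      exact h2
    omega
  set T := (Finset.range (δ/2+1)).biUnion fun i =>
    (P.powersetCard i) ×ˢ (Q.powersetCard i) with hTdef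
  have hT : T.card ≤ ∑ i ∈ Finset.range (δ / 2 + 1), ω.choose i * (d - ω).choose i := by
    refine le_trans (Finset.card_biUnion_le) (Finset.sum_le_sum ?_)
    intro i _
    rw [Finset.card_product, Finset.card_powersetCard, Finset.card_powersetCard, hP, hQ]
  refine le_trans ?_ hT
  apply Finset.card_le_card_of_injOn (fun x =>
    (Finset.univ.filter fun i => s i = true ∧ x i = false,
     Finset.univ.filter fun i => s i = false ∧ x i = true))
  · intro x hx
    rw [Finset.mem_coe] at hx
    simp only [mem_filter, mem_univ, true_and] at hx
    obtain ⟨hxw, hxd⟩ := hx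
    set A := Finset.univ.filter fun i => s i = true ∧ x i = false with hAdef
    set B := Finset.univ.filter fun i => s i = false ∧ x i = true with hBdef
    set C := Finset.univ.filter fun i => s i = true ∧ x i = true with hCdef
    have h1 : weight x = C.card + B.card := by
      rw [weight, ← Finset.card_union_of_disjoint]
      · congr 1
        ext i
        simp only [hCdef, hBdef, mem_filter, mem_univ, true_and, mem_union]
        cases hsi : s i <;> simp [hsi]
      · rw [Finset.disjoint_left]
        intro i hi hi'
        simp only [hCdef, hBdef, mem_filter] at hi hi'
        simp [hi.2.1] at hi'
    have h2 : ω = C.card + A.card := by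
      rw [← hP, ← Finset.card_union_of_disjoint]
      · congr 1
        ext i
        simp only [hPdef, hCdef, hAdef, mem_filter, mem_univ, true_and, mem_union]
        cases hxi : x i <;> simp [hxi]
      · rw [Finset.disjoint_left]
        intro i hi hi'
        simp only [hCdef, hAdef, mem_filter] at hi hi'
        simp [hi.2.2] at hi'
    have h3 : hammingDist x s = A.card + B.card := by
      rw [hammingDist, ← Finset.card_union_of_disjoint]
      · congr 1
        ext i
        simp only [hAdef, hBdef, mem_filter, mem_univ, true_and, mem_union]
        cases hsi : s i <;> cases hxi : x i <;> simp [hsi, hxi]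
      · rw [Finset.disjoint_left]
        intro i hi hi'
        simp only [hAdef, hBdef, mem_filter] at hi hi'
        simp [hi.2.1] at hi'
    have hAB : A.card = B.card := by omega
    have hle : A.card ≤ δ / 2 := by omega
    rw [Finset.mem_coe, hTdef, Finset.mem_biUnion]
    refine ⟨A.card, Finset.mem_range.mpr (by omega), ?_⟩
    rw [Finset.mem_product, Finset.mem_powersetCard, Finset.mem_powersetCard]
    refine ⟨⟨?_, rfl⟩, ?_, hAB.symm⟩
    · intro i hi
      simp only [hAdef, hPdef, mem_filter, mem_univ, true_and] at hi ⊢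
      exact hi.1
    · intro i hi
      simp only [hBdef, hQdef, mem_filter, mem_univ, true_and] at hi ⊢
      exact hi.1
  · intro x hx y hy hxy
    funext i
    have hfst := Finset.ext_iff.mp (congrArg Prod.fst hxy) i
    have hsnd := Finset.ext_iff.mp (congrArg Prod.snd hxy) i
    simp only [mem_filter, mem_univ, true_and] at hfst hsnd
    cases hsi : s i
    · simp only [hsi, true_and] at hsnd
      cases hxi : x i <;> cases hyi : y i <;> simp_all
    · simp only [hsi, true_and] at hfst
      cases hxi : x i <;> cases hyi : y i <;> simp_all

theorem stmt_0 (d ω δ : ℕ) (hω : ω ≤ d) (hδ : δ ≤ d) :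
    ∃ S : Finset (Fin d → Bool),
      (∀ x ∈ S, weight x = ω) ∧
      (∀ x ∈ S, ∀ y ∈ S, x ≠ y → δ ≤ hammingDist x y) ∧
      ((d.choose ω : ℝ) / (∑ i ∈ Finset.range (δ / 2 + 1),
          (ω.choose i : ℝ) * ((d - ω).choose i : ℝ)) ≤ (S.card : ℝ)) := by
  classical
  set V := ∑ i ∈ Finset.range (δ / 2 + 1), ω.choose i * ((d - ω).choose i) with hVdef
  set W := Finset.univ.filter (fun x : Fin d → Bool => weight x = ω) with hWdef
  set 𝒞 := W.powerset.filter
    (fun S => ∀ x ∈ S, ∀ y ∈ S, x ≠ y → δ ≤ hammingDist x y) with h𝒞def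
  have hne : 𝒞.Nonempty := ⟨∅, by simp [h𝒞def]⟩
  obtain ⟨S, hS𝒞, hmax⟩ := 𝒞.exists_max_image Finset.card hne
  rw [h𝒞def, Finset.mem_filter, Finset.mem_powerset] at hS𝒞
  have hSW : ∀ x ∈ S, weight x = ω := by
    intro x hx
    have := hS𝒞.1 hx
    rw [hWdef, Finset.mem_filter] at this
    exact this.2
  refine ⟨S, hSW, hS𝒞.2, ?_⟩
  have hcov : W ⊆ S.biUnion fun s =>
      Finset.univ.filter fun x => weight x = ω ∧ hammingDist x s ≤ δ - 1 := by
    intro w hw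
    by_contra hc
    rw [Finset.mem_biUnion] at hc
    push_neg at hc
    have hww : weight w = ω := by
      rw [hWdef, Finset.mem_filter] at hw; exact hw.2
    have hwS : w ∉ S := by
      intro h
      exact hc w h (by simp [hww, hammingDist_self])
    have hfar : ∀ s ∈ S, δ ≤ hammingDist w s := by
      intro s hsS
      have := hc s hsS
      simp only [Finset.mem_filter, mem_univ, true_and, not_and, not_le] at this
      have := this hww
      omega
    have hins : insert w S ∈ 𝒞 := by
      rw [h𝒞def, Finset.mem_filter, Finset.mem_powerset]
      refine ⟨Finset.insert_subset hw hS𝒞.1, ?_⟩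
      intro x hx y hy hxy
      rcases Finset.mem_insert.mp hx with rfl | hx' <;>
        rcases Finset.mem_insert.mp hy with rfl | hy'
      · exact absurd rfl hxy
      · exact hfar y hy'
      · rw [hammingDist_comm]; exact hfar x hx'
      · exact hS𝒞.2 x hx' y hy' hxy
    have := hmax _ hins
    rw [Finset.card_insert_of_notMem hwS] at this
    omega
  have hcard : d.choose ω ≤ S.card * V := by
    calc d.choose ω = W.card := (weight_card d ω).symm
      _ ≤ (S.biUnion fun s =>
          Finset.univ.filter fun x => weight x = ω ∧ hammingDist x s ≤ δ - 1).card :=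
        Finset.card_le_card hcov
      _ ≤ ∑ s ∈ S, (Finset.univ.filter fun x : Fin d → Bool =>
          weight x = ω ∧ hammingDist x s ≤ δ - 1).card := Finset.card_biUnion_le
      _ ≤ ∑ _s ∈ S, V := Finset.sum_le_sum fun s hsS => ball_card d ω δ s (hSW s hsS)
      _ = S.card * V := by rw [Finset.sum_const, smul_eq_mul]
  have hV1 : 1 ≤ V := by
    have : (fun i => ω.choose i * (d - ω).choose i) 0 ≤ V :=
      Finset.single_le_sum (f := fun i => ω.choose i * (d - ω).choose i)
        (fun i _ => Nat.zero_le _) (Finset.mem_range.mpr (Nat.succ_pos _))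
    simpa using this
  have hVR : (∑ i ∈ Finset.range (δ / 2 + 1),
      (ω.choose i : ℝ) * ((d - ω).choose i : ℝ)) = (V : ℝ) := by
    rw [hVdef]; push_cast; ring
  rw [hVR, div_le_iff₀ (by exact_mod_cast hV1 : (0:ℝ) < V)]
  exact_mod_cast hcard
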